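/- Let p be a nonzero polynomial on ℂ² with top homogeneous component p_k, and choose v ∈ ℂ² with |v| = 1 and p_k(v) ≠ 0. Then there is a constant C_p = 1/|p_k(v)| such that for every entire function f on ℂ² and every λ ∈ ℂ²: |f(λ)| ≤ C_p · sup_{|μ| ≤ 1} |p(λ + μ) f(λ + μ)|. -/

import Mathlib

open Polynomial Metric


noncomputable def blf (r z : ℂ) : ℂ :=
  if 1 ≤ ‖r‖ then z - r else 1 - (starRingEnd ℂ r) * z

lemma blf_diff (r : ℂ) : Differentiable ℂ (fun z => blf r z) := by
  unfold blf; split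
  · exact differentiable_id.sub_const r
  · exact (differentiable_const 1).sub ((differentiable_const _).mul differentiable_id)

lemma blf_norm_circle (r : ℂ) {z : ℂ} (hz : ‖z‖ = 1) : ‖blf r z‖ = ‖z - r‖ := by
  unfold blf; split
  · rfl
  · have h1 : (starRingEnd ℂ z) * z = 1 := by
      rw [mul_comm, Complex.mul_conj]
      norm_cast
      simp [← Complex.sq_norm, hz]
    calc ‖1 - (starRingEnd ℂ r) * z‖
        = ‖(starRingEnd ℂ (z - r)) * z‖ := by rw [map_sub, sub_mul, h1]
      _ = ‖z - r‖ := by rw [norm_mul, RCLike.norm_conj (z - r), hz, mul_one]  -- fix name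

lemma blf_norm_zero (r : ℂ) : 1 ≤ ‖blf r 0‖ := by
  unfold blf; split
  · simpa using ‹1 ≤ ‖r‖›
  · simp

lemma norm_msprod (S : Multiset ℂ) : ‖S.prod‖ = (S.map fun x => ‖x‖).prod := by
  induction S using Multiset.induction_on with
  | empty => simp
  | cons a s ih => simp [norm_mul, ih]

lemma one_le_msprod (S : Multiset ℝ) (h : ∀ x ∈ S, 1 ≤ x) : 1 ≤ S.prod := by
  induction S using Multiset.induction_on with
  | empty => simp
  | cons a s ih =>
    simp only [Multiset.prod_cons]
    have ha := h a (by simp)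
    have hs := ih (fun x hx => h x (by simp [hx]))
    nlinarith

lemma key_lemma (q : Polynomial ℂ) (g : ℂ → ℂ) (hg : Differentiable ℂ g)
    (C : ℝ) (hC : ∀ z : ℂ, ‖z‖ = 1 → ‖q.eval z * g z‖ ≤ C) :
    ‖g 0‖ * ‖q.leadingCoeff‖ ≤ C := by
  rcases eq_or_ne q 0 with rfl | hq
  · simpa using le_trans (by simp) (hC 1 (by simp))
  set R := q.roots with hR
  have hfac : q = Polynomial.C q.leadingCoeff * (R.map fun r => X - Polynomial.C r).prod :=
    Splits.eq_prod_roots (IsAlgClosed.splits q)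
  set h : ℂ → ℂ := fun z => g z * q.leadingCoeff * (R.map fun r => blf r z).prod with hh
  have hdiffS : ∀ (S : Multiset ℂ), Differentiable ℂ (fun z => (S.map fun r => blf r z).prod) := by
    intro S
    induction S using Multiset.induction_on with
    | empty => simpa using differentiable_const (1 : ℂ)
    | cons a s ih =>
      simp only [Multiset.map_cons, Multiset.prod_cons]
      exact (blf_diff a).mul ih
  have hdiff : Differentiable ℂ h := ((hg.mul (differentiable_const _)).mul (hdiffS R))
  have hnorm : ∀ z : ℂ, ‖z‖ = 1 → ‖h z‖ = ‖q.eval z * g z‖ := by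
    intro z hz
    have hev : q.eval z = q.leadingCoeff * (R.map fun r => z - r).prod := by
      conv_lhs => rw [hfac]
      rw [eval_mul, eval_C, eval_multiset_prod, Multiset.map_map]
      simp [Function.comp]
    rw [hh, hev]
    simp only [norm_mul, norm_msprod, Multiset.map_map, Function.comp]
    rw [Multiset.map_congr rfl (fun r _ => blf_norm_circle r hz)]
    ring
  have h0 : ‖g 0‖ * ‖q.leadingCoeff‖ ≤ ‖h 0‖ := by
    have hprod : (1:ℝ) ≤ (R.map fun r => ‖blf r 0‖).prod := by
      refine one_le_msprod _ ?_
      intro x hx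
      obtain ⟨r, _, rfl⟩ := Multiset.mem_map.mp hx
      exact blf_norm_zero r
    rw [hh]
    simp only [norm_mul, norm_msprod, Multiset.map_map, Function.comp]
    exact le_mul_of_one_le_right (by positivity) (by simpa [Function.comp] using hprod)
  refine h0.trans ?_
  have := Complex.norm_le_of_forall_mem_frontier_norm_le (isBounded_ball (x := (0:ℂ)) (r := 1))
    hdiff.diffContOnCl (C := C) ?_ (subset_closure (mem_ball_self one_pos))
  · exact this
  · intro z hz
    rw [frontier_ball (0:ℂ) one_ne_zero] at hz
    have hz1 : ‖z‖ = 1 := by simpa [mem_sphere_zero_iff_norm] using hz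
    rw [hnorm z hz1]
    exact hC z hz1

lemma heval_aux (lam v : Fin 2 → ℂ) (P : MvPolynomial (Fin 2) ℂ) (z : ℂ) :
    eval z (MvPolynomial.aeval (fun i => Polynomial.C (lam i) + Polynomial.C (v i) * X) P)
      = MvPolynomial.eval (fun i => lam i + v i * z) P := by
  induction P using MvPolynomial.induction_on with
  | C a => simp
  | add f g hf hg => simp [hf, hg]
  | mul_X f i hf => simp [hf]

example (lam v : Fin 2 → ℂ) (i : Fin 2) :
    (Polynomial.C (lam i) + Polynomial.C (v i) * X).natDegree ≤ 1 := by
  compute_degree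

lemma termcoeff (g0 g1 : Polynomial ℂ) (h0 : g0.natDegree ≤ 1) (h1 : g1.natDegree ≤ 1) (a b : ℕ) :
    (g0 ^ a * g1 ^ b).coeff (a + b) = g0.coeff 1 ^ a * g1.coeff 1 ^ b := by
  have d0 : (g0 ^ a).natDegree ≤ a := natDegree_pow_le.trans (by simpa using Nat.mul_le_mul_left a h0)
  have d1 : (g1 ^ b).natDegree ≤ b := natDegree_pow_le.trans (by simpa using Nat.mul_le_mul_left b h1)
  rw [coeff_mul_add_eq_of_natDegree_le d0 d1]
  have c0 := coeff_pow_of_natDegree_le (m := a) h0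
  have c1 := coeff_pow_of_natDegree_le (m := b) h1
  rw [mul_one] at c0 c1
  rw [c0, c1]

lemma termdeg (g0 g1 : Polynomial ℂ) (h0 : g0.natDegree ≤ 1) (h1 : g1.natDegree ≤ 1) (a b : ℕ) :
    (g0 ^ a * g1 ^ b).natDegree ≤ a + b := by
  refine natDegree_mul_le.trans (add_le_add ?_ ?_)
  · exact natDegree_pow_le.trans (by simpa using Nat.mul_le_mul_left a h0)
  · exact natDegree_pow_le.trans (by simpa using Nat.mul_le_mul_left b h1)

lemma hdegm (m : Fin 2 →₀ ℕ) : Finsupp.degree m = m 0 + m 1 := by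
  rw [Finsupp.degree, ← Fin.sum_univ_two (f := fun i => m i)]
  exact Finset.sum_subset (Finset.subset_univ _)
    (fun i _ hi => Finsupp.notMem_support_iff.mp hi)

lemma hsumm (m : Fin 2 →₀ ℕ) : (m.sum fun _ e => e) = m 0 + m 1 := by
  rw [Finsupp.sum_fintype _ _ (fun _ => rfl), Fin.sum_univ_two]

lemma aeval_eq_sum (lam v : Fin 2 → ℂ) (p : MvPolynomial (Fin 2) ℂ) :
    (MvPolynomial.aeval (fun i => Polynomial.C (lam i) + Polynomial.C (v i) * X) p : Polynomial ℂ)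
      = ∑ m ∈ p.support, Polynomial.C (MvPolynomial.coeff m p) *
          ((Polynomial.C (lam 0) + Polynomial.C (v 0) * X) ^ (m 0) *
           (Polynomial.C (lam 1) + Polynomial.C (v 1) * X) ^ (m 1)) := by
  conv_lhs => rw [p.as_sum, map_sum]
  refine Finset.sum_congr rfl (fun m _ => ?_)
  rw [MvPolynomial.aeval_monomial]
  rw [Finsupp.prod_fintype _ _ (fun i => pow_zero _), Fin.prod_univ_two]
  rfl

lemma natDegree_aeval_le (lam v : Fin 2 → ℂ) (p : MvPolynomial (Fin 2) ℂ) :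
    (MvPolynomial.aeval (fun i => Polynomial.C (lam i) + Polynomial.C (v i) * X) p : Polynomial ℂ).natDegree
      ≤ p.totalDegree := by
  rw [aeval_eq_sum]
  refine natDegree_sum_le_of_forall_le _ _ (fun m hm => ?_)
  refine natDegree_mul_le.trans ?_
  have h1 : (m 0) + (m 1) ≤ p.totalDegree := by
    rw [← hsumm m]; exact MvPolynomial.le_totalDegree hm
  have h2 := termdeg (Polynomial.C (lam 0) + Polynomial.C (v 0) * X)
    (Polynomial.C (lam 1) + Polynomial.C (v 1) * X) (by compute_degree) (by compute_degree) (m 0) (m 1)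
  simpa [natDegree_C] using h2.trans h1

lemma coeff_top (lam v : Fin 2 → ℂ) (p : MvPolynomial (Fin 2) ℂ) :
    (MvPolynomial.aeval (fun i => Polynomial.C (lam i) + Polynomial.C (v i) * X) p : Polynomial ℂ).coeff p.totalDegree
      = MvPolynomial.eval v (MvPolynomial.homogeneousComponent p.totalDegree p) := by
  classical
  rw [aeval_eq_sum, finset_sum_coeff]
  rw [MvPolynomial.homogeneousComponent_apply, map_sum]
  rw [Finset.sum_filter]
  refine Finset.sum_congr rfl (fun m hm => ?_)
  rw [coeff_C_mul]
  by_cases hdm : Finsupp.degree m = p.totalDegree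
  · rw [if_pos hdm, ← hdm, hdegm m]
    rw [termcoeff _ _ (by compute_degree) (by compute_degree)]
    rw [MvPolynomial.eval_monomial]
    rw [Finsupp.prod_fintype _ _ (fun i => pow_zero _), Fin.prod_univ_two]
    simp [coeff_add, coeff_C, coeff_C_mul, coeff_X]
  · rw [if_neg hdm]
    have hlt : m 0 + m 1 < p.totalDegree := by
      have hle : m 0 + m 1 ≤ p.totalDegree := by
        rw [← hsumm m]; exact MvPolynomial.le_totalDegree hm
      rcases lt_or_eq_of_le hle with h | h
      · exact h
      · exact absurd (by rw [hdegm m, h]) hdm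
    rw [coeff_eq_zero_of_natDegree_lt (lt_of_le_of_lt (termdeg _ _ (by compute_degree) (by compute_degree) _ _) hlt), mul_zero]
/-- Two-variable maximum-principle estimate: for a nonzero polynomial `p` on `ℂ²` with top
homogeneous component `p_k`, `v` with `|v| = 1` and `p_k(v) ≠ 0`, and any entire `f`,
`|f λ| ≤ |p_k(v)|⁻¹ · sup_{|μ| ≤ 1} |p(λ+μ) f(λ+μ)|` for all `λ ∈ ℂ²`. -/
theorem stmt13 (p : MvPolynomial (Fin 2) ℂ) (hp : p ≠ 0)
    (v : EuclideanSpace ℂ (Fin 2)) (hv : ‖v‖ = 1)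
    (hpk : MvPolynomial.eval (fun i => v i)
      (MvPolynomial.homogeneousComponent p.totalDegree p) ≠ 0)
    (f : EuclideanSpace ℂ (Fin 2) → ℂ) (hf : Differentiable ℂ f)
    (lam : EuclideanSpace ℂ (Fin 2)) :
    ‖f lam‖ ≤ ‖MvPolynomial.eval (fun i => v i)
        (MvPolynomial.homogeneousComponent p.totalDegree p)‖⁻¹ *
      sSup {x : ℝ | ∃ μ : EuclideanSpace ℂ (Fin 2), ‖μ‖ ≤ 1 ∧
        x = ‖MvPolynomial.eval (fun i => lam i + μ i) p * f (lam + μ)‖} := by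
  classical
  set a : ℂ := MvPolynomial.eval (fun i => v i)
    (MvPolynomial.homogeneousComponent p.totalDegree p) with ha
  set S : Set ℝ := {x : ℝ | ∃ μ : EuclideanSpace ℂ (Fin 2), ‖μ‖ ≤ 1 ∧
        x = ‖MvPolynomial.eval (fun i => lam i + μ i) p * f (lam + μ)‖} with hS
  set q : Polynomial ℂ :=
    MvPolynomial.aeval (fun i => Polynomial.C (lam i) + Polynomial.C (v i) * X) p with hq
  -- leading coefficient of q
  have hcoeff : q.coeff p.totalDegree = a := coeff_top (fun i => lam i) (fun i => v i) p
  have hqne : q ≠ 0 := fun h => hpk (by rw [← hcoeff, h, coeff_zero])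
  have hnd : q.natDegree = p.totalDegree :=
    le_antisymm (natDegree_aeval_le _ _ p) (le_natDegree_of_ne_zero (hcoeff ▸ hpk))
  have hlead : q.leadingCoeff = a := by rw [leadingCoeff, hnd, hcoeff]
  -- the entire function g along the line
  set g : ℂ → ℂ := fun z => f (lam + z • v) with hg
  have hgd : Differentiable ℂ g :=
    hf.comp ((differentiable_const lam).add (differentiable_id.smul_const v))
  -- S is bounded above
  have hbdd : BddAbove S := by
    have hcont : Continuous fun μ : EuclideanSpace ℂ (Fin 2) =>
        ‖MvPolynomial.eval (fun i => lam i + μ i) p * f (lam + μ)‖ := by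
      refine Continuous.norm (Continuous.mul ?_ ?_)
      · exact (MvPolynomial.continuous_eval (p := p)).comp
          (continuous_pi fun i => continuous_const.add ((EuclideanSpace.proj i).continuous))
      · exact hf.continuous.comp (continuous_const.add continuous_id)
    have himg : S = (fun μ : EuclideanSpace ℂ (Fin 2) =>
        ‖MvPolynomial.eval (fun i => lam i + μ i) p * f (lam + μ)‖) '' closedBall 0 1 := by
      ext x
      constructor
      · rintro ⟨μ, hμ, rfl⟩
        exact ⟨μ, by simpa [mem_closedBall_zero_iff] using hμ, rfl⟩
      · rintro ⟨μ, hμ, rfl⟩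
        exact ⟨μ, by simpa [mem_closedBall_zero_iff] using hμ, rfl⟩
    rw [himg]
    exact ((isCompact_closedBall _ _).image hcont).bddAbove
  -- on the circle, values lie in S
  have hC : ∀ z : ℂ, ‖z‖ = 1 → ‖q.eval z * g z‖ ≤ sSup S := by
    intro z hz
    refine le_csSup hbdd ?_
    have harg : (fun i => lam i + v i * z) = (fun i => lam i + (z • v) i) := by
      funext i
      simp [mul_comm]
    have h1 : q.eval z = MvPolynomial.eval (fun i => lam i + (z • v) i) p := by
      rw [hq, heval_aux, harg]
    exact ⟨z • v, by simp [norm_smul, hz, hv], by rw [h1]⟩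
  -- apply the one-variable lemma
  have hkey := key_lemma q g hgd (sSup S) hC
  rw [hlead] at hkey
  have hg0 : g 0 = f lam := by rw [hg]; simp
  rw [hg0] at hkey
  have hapos : 0 < ‖a‖ := norm_pos_iff.mpr hpk
  calc ‖f lam‖ = (‖f lam‖ * ‖a‖) * ‖a‖⁻¹ := by
        rw [mul_assoc, mul_inv_cancel₀ (ne_of_gt hapos), mul_one]
    _ ≤ sSup S * ‖a‖⁻¹ := by gcongr
    _ = ‖a‖⁻¹ * sSup S := mul_comm _ _
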